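/- For all u, v in R^d, one has ‖u+v‖³ ≤ ‖u‖³ + 3‖u‖⟨u,v⟩ + 3‖u‖‖v‖² + 2‖v‖³. -/
import Mathlib

open RealInnerProductSpace

theorem cubed_norm_taylor_bound (d : ℕ) (u v : EuclideanSpace ℝ (Fin d)) :
    ‖u + v‖ ^ 3 ≤ ‖u‖ ^ 3 + 3 * ‖u‖ * ⟪u, v⟫ + 3 * ‖u‖ * ‖v‖ ^ 2 + 2 * ‖v‖ ^ 3 := by
  have hsq : ‖u + v‖ ^ 2 = ‖u‖ ^ 2 + 2 * ⟪u, v⟫ + ‖v‖ ^ 2 := by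
    have := norm_add_sq_real u v; linarith
  have htri : ‖u + v‖ ≤ ‖u‖ + ‖v‖ := norm_add_le u v
  have htri2 : ‖u‖ - ‖v‖ ≤ ‖u + v‖ := by
    have := norm_sub_norm_le u (u + v)
    have h : u - (u + v) = -v := by abel
    rw [h, norm_neg] at this; linarith
  have h1 : (0:ℝ) ≤ ‖u‖ := norm_nonneg u
  have h2 : (0:ℝ) ≤ ‖v‖ := norm_nonneg v
  have h3 : (0:ℝ) ≤ ‖u + v‖ := norm_nonneg _
  have key : (‖u + v‖ - ‖u‖) ^ 2 ≤ ‖v‖ ^ 2 := by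
    apply sq_le_sq' <;> linarith
  have key2 : (‖v‖ ^ 2 - (‖u + v‖ - ‖u‖) ^ 2) * (2 * ‖u + v‖ + ‖u‖) ≥ 0 :=
    mul_nonneg (by linarith) (by linarith)
  have key3 : (‖u‖ + ‖v‖ - ‖u + v‖) * ‖v‖ ^ 2 ≥ 0 :=
    mul_nonneg (by linarith) (sq_nonneg _)
  nlinarith [key2, key3, mul_nonneg h1 h2, mul_nonneg (mul_nonneg h2 h2) h2]
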